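/- For every integer q ≥ 2, Σ_{p|q} (log p)/(p−1) ≤ 1.02·log log q + 3.04, where the sum runs over the distinct prime divisors p of q. -/

import Mathlib

open Real Finset

local notation "P" n => Finset.filter Nat.Prime (Finset.range (n + 1))

lemma log_ge_one_sub_inv {x : ℝ} (hx : 0 < x) : 1 - 1/x ≤ Real.log x := by
  have h := Real.log_le_sub_one_of_pos (show (0:ℝ) < 1/x by positivity)
  rw [Real.log_div one_ne_zero (ne_of_gt hx)] at h
  rw [one_div]; simp at h; linarith

lemma log3_lt : Real.log 3 < 1.0989 := by
  have h2 := Real.log_two_lt_d9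
  have key : (5:ℝ) * Real.log 3 = 8 * Real.log 2 - Real.log (256/243) := by
    rw [Real.log_div (by norm_num) (by norm_num)]
    rw [show (256:ℝ) = 2^8 by norm_num, show (243:ℝ) = 3^5 by norm_num,
      Real.log_pow, Real.log_pow]
    push_cast; ring
  have hl := log_ge_one_sub_inv (show (0:ℝ) < 256/243 by norm_num)
  nlinarith

lemma log5_lt : Real.log 5 < 1.6096 := by
  have h2 := Real.log_two_lt_d9
  have key : (3:ℝ) * Real.log 5 = 7 * Real.log 2 - Real.log (128/125) := by
    rw [Real.log_div (by norm_num) (by norm_num)]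
    rw [show (128:ℝ) = 2^7 by norm_num, show (125:ℝ) = 5^3 by norm_num,
      Real.log_pow, Real.log_pow]
    push_cast; ring
  have hl := log_ge_one_sub_inv (show (0:ℝ) < 128/125 by norm_num)
  nlinarith

lemma log7_lt : Real.log 7 < 1.9493 := by
  have h2 := Real.log_two_lt_d9
  have h2' := Real.log_two_gt_d9
  have key : (4:ℝ) * Real.log 7 = 11 * Real.log 2 + Real.log (2401/2048) := by
    rw [Real.log_div (by norm_num) (by norm_num)]
    rw [show (2048:ℝ) = 2^11 by norm_num, show (2401:ℝ) = 7^4 by norm_num,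
      Real.log_pow, Real.log_pow]
    push_cast; ring
  have hu := Real.log_le_sub_one_of_pos (show (0:ℝ) < 2401/2048 by norm_num)
  nlinarith

lemma log11_lt : Real.log 11 < 2.3987 := by
  have h2 := Real.log_two_lt_d9
  have key : (2:ℝ) * Real.log 11 = 7 * Real.log 2 - Real.log (128/121) := by
    rw [Real.log_div (by norm_num) (by norm_num)]
    rw [show (128:ℝ) = 2^7 by norm_num, show (121:ℝ) = 11^2 by norm_num,
      Real.log_pow, Real.log_pow]
    push_cast; ring
  have hl := log_ge_one_sub_inv (show (0:ℝ) < 128/121 by norm_num)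
  nlinarith

lemma fact_exp : ∀ n : ℕ, 1 ≤ n → (n.factorial : ℝ) * Real.exp ((n:ℝ) - 1) ≤ (n:ℝ)^(n+1) := by
  intro n hn
  induction n with
  | zero => omega
  | succ m ih =>
    rcases Nat.eq_or_lt_of_le hn with h1 | h1
    · simp [← h1]
    · have hm : 1 ≤ m := by omega
      have ihm := ih hm
      have hmpos : (0:ℝ) < m := by exact_mod_cast hm
      -- key : e * m^(m+1) ≤ (m+1)^(m+1)
      have hkey : Real.exp 1 * (m:ℝ)^(m+1) ≤ ((m:ℝ)+1)^(m+1) := by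
        have h0 : (0:ℝ) ≤ 1 - 1/((m:ℝ)+1) := by
          rw [sub_nonneg]; rw [div_le_one (by positivity)]; linarith
        have h1 : 1 - 1/((m:ℝ)+1) ≤ Real.exp (-(1/((m:ℝ)+1))) := by
          have := Real.add_one_le_exp (-(1/((m:ℝ)+1))); linarith
        have h2 : (1 - 1/((m:ℝ)+1))^(m+1) ≤ Real.exp (-(1/((m:ℝ)+1)))^(m+1) :=
          pow_le_pow_left₀ h0 h1 _
        have h3 : Real.exp (-(1/((m:ℝ)+1)))^(m+1) = Real.exp (-1) := by
          rw [← Real.exp_nat_mul]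
          congr 1
          field_simp
          simp
        have h4 : (1 - 1/((m:ℝ)+1)) = (m:ℝ)/((m:ℝ)+1) := by field_simp; ring
        rw [h4, h3, div_pow] at h2
        rw [div_le_iff₀ (by positivity)] at h2
        have := Real.exp_pos (1:ℝ)
        have hrw : Real.exp (-1) * Real.exp 1 = 1 := by
          rw [← Real.exp_add]; simp
        nlinarith [pow_pos hmpos (m+1), pow_pos (show (0:ℝ) < (m:ℝ)+1 by linarith) (m+1)]
      have hexp : Real.exp (((m:ℝ)+1) - 1) = Real.exp ((m:ℝ)-1) * Real.exp 1 := by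
        rw [← Real.exp_add]; ring_nf
      push_cast [Nat.factorial_succ]
      push_cast at ihm
      calc ((m:ℝ)+1) * (m.factorial : ℝ) * Real.exp ((m:ℝ)+1-1)
          = ((m:ℝ)+1) * (((m.factorial : ℝ)) * Real.exp ((m:ℝ)-1)) * Real.exp 1 := by
            rw [hexp]; ring
        _ ≤ ((m:ℝ)+1) * (m:ℝ)^(m+1) * Real.exp 1 := by
            have h5 : (0:ℝ) < Real.exp 1 := Real.exp_pos 1
            have h6 : (0:ℝ) ≤ (m:ℝ)+1 := by positivity
            exact mul_le_mul_of_nonneg_right (mul_le_mul_of_nonneg_left ihm h6) h5.le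
        _ ≤ ((m:ℝ)+1) * (((m:ℝ)+1)^(m+1)) := by
            rw [mul_assoc]
            refine mul_le_mul_of_nonneg_left ?_ (by positivity)
            rw [mul_comm]; exact hkey
        _ = ((m:ℝ)+1)^(m+1+1) := by ring

lemma log_factorial_le {n : ℕ} (hn : 1 ≤ n) :
    Real.log (n.factorial) ≤ ((n:ℝ)+1) * Real.log n - ((n:ℝ) - 1) := by
  have h := fact_exp n hn
  have hf : (0:ℝ) < (n.factorial : ℝ) := by exact_mod_cast n.factorial_pos
  have hnp : (0:ℝ) < (n:ℝ) := by exact_mod_cast hn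
  have := Real.log_le_log (by positivity) h
  rw [Real.log_mul (ne_of_gt hf) (ne_of_gt (Real.exp_pos _)), Real.log_exp,
    Real.log_pow] at this
  push_cast at this
  linarith


-- Chebyshev
lemma theta_le (n : ℕ) : ∑ p ∈ P n, Real.log p ≤ (n:ℝ) * (2 * Real.log 2) := by
  have h : (primorial n : ℝ) ≤ (4:ℝ)^n := by exact_mod_cast primorial_le_4_pow n
  have hpos : ∀ p ∈ P n, (0:ℝ) < p := by
    intro p hp
    simp only [mem_filter] at hp
    exact_mod_cast hp.2.pos
  have hlog := Real.log_le_log (by exact_mod_cast primorial_pos n) h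
  rw [show ((primorial n : ℕ) : ℝ) = ∏ p ∈ P n, (p:ℝ) by
        rw [primorial]; push_cast; rfl] at hlog
  rw [Real.log_prod (fun p hp => ne_of_gt (hpos p hp))] at hlog
  rw [Real.log_pow, show (4:ℝ) = 2^2 by norm_num, Real.log_pow] at hlog
  push_cast at hlog ⊢
  linarith

-- pairwise coprime product divides
lemma nat_prod_dvd {s : Finset ℕ} {f : ℕ → ℕ} {z : ℕ}
    (hc : ∀ p ∈ s, ∀ q ∈ s, p ≠ q → Nat.Coprime (f p) (f q))
    (hd : ∀ p ∈ s, f p ∣ z) : (∏ p ∈ s, f p) ∣ z := by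
  classical
  induction s using Finset.induction_on with
  | empty => simp
  | @insert a t hnotmem ih =>
    rw [Finset.prod_insert hnotmem]
    apply Nat.Coprime.mul_dvd_of_dvd_of_dvd
    · apply Nat.Coprime.prod_right
      intro q hq
      exact hc a (Finset.mem_insert_self a t) q (Finset.mem_insert_of_mem hq)
        (fun h => hnotmem (h ▸ hq))
    · exact hd a (Finset.mem_insert_self a t)
    · exact ih (fun p hp q hq hpq => hc p (Finset.mem_insert_of_mem hp) q
        (Finset.mem_insert_of_mem hq) hpq)
        (fun p hp => hd p (Finset.mem_insert_of_mem hp))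

-- Legendre-type divisibility
lemma prod_pow_dvd_factorial (n : ℕ) : (∏ p ∈ P n, p ^ (n / p)) ∣ n.factorial := by
  apply nat_prod_dvd
  · intro p hp q hq hpq
    simp only [Finset.mem_filter, Finset.mem_range] at hp hq
    exact Nat.Coprime.pow _ _ ((Nat.coprime_primes hp.2 hq.2).mpr hpq)
  · intro p hp
    simp only [Finset.mem_filter, Finset.mem_range] at hp
    obtain ⟨hlt, hprime⟩ := hp
    rw [Nat.Prime.pow_dvd_factorial_iff hprime (Nat.lt_succ_self _)]
    have h2 := hprime.two_le
    rcases Nat.eq_zero_or_pos (Nat.log p n) with h0 | h0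
    · have : n < p := by
        by_contra hnp
        push_neg at hnp
        have := Nat.log_eq_zero_iff.mp h0
        rcases this with h | h
        · omega
        · exact absurd h (by omega : ¬ p ≤ 1)
      simp [Nat.div_eq_of_lt this]
    · have h1 : 1 ∈ Finset.Ico 1 (Nat.log p n + 1) := by
        simp; omega
      calc n / p = n / p ^ 1 := by rw [pow_one]
        _ ≤ ∑ i ∈ Finset.Ico 1 (Nat.log p n + 1), n / p ^ i :=
            Finset.single_le_sum (f := fun i => n / p ^ i) (fun i _ => Nat.zero_le _) h1


lemma mertens_aux {n : ℕ} (hn : 22 ≤ n) :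
    ∑ p ∈ P n, Real.log p / p ≤
      Real.log n + (Real.log n + 1)/n + (2 * Real.log 2 - 1) := by
  have hn1 : 1 ≤ n := by omega
  have hnR : (0:ℝ) < n := by exact_mod_cast hn1
  -- step (a)
  have ha : ∑ p ∈ P n, ((n / p : ℕ) : ℝ) * Real.log p ≤ Real.log (n.factorial) := by
    have hd := prod_pow_dvd_factorial n
    have hle : ((∏ p ∈ P n, p ^ (n / p) : ℕ) : ℝ) ≤ (n.factorial : ℝ) := by
      exact_mod_cast Nat.le_of_dvd n.factorial_pos hd
    have hpos : (0:ℝ) < ((∏ p ∈ P n, p ^ (n / p) : ℕ) : ℝ) := by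
      have : 0 < ∏ p ∈ P n, p ^ (n / p) := by
        apply Finset.prod_pos
        intro p hp
        simp only [Finset.mem_filter] at hp
        exact pow_pos hp.2.pos _
      exact_mod_cast this
    have := Real.log_le_log hpos hle
    rw [show ((∏ p ∈ P n, p ^ (n / p) : ℕ) : ℝ) = ∏ p ∈ P n, ((p:ℝ)) ^ (n / p : ℕ) by
      push_cast; rfl] at this
    rw [Real.log_prod] at this
    · convert this using 2 with p hp
      rw [Real.log_pow]
    · intro p hp
      simp only [Finset.mem_filter] at hp
      have := hp.2.pos
      have : (0:ℝ) < (p:ℝ) := by exact_mod_cast this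
      positivity
  -- step (b): n/p real ≤ nat floor + 1
  have hb : ∀ p ∈ P n, (n:ℝ)/p * Real.log p ≤ (((n / p : ℕ) : ℝ) + 1) * Real.log p := by
    intro p hp
    simp only [Finset.mem_filter, Finset.mem_range] at hp
    have hp2 := hp.2.two_le
    have hppos : (0:ℝ) < p := by exact_mod_cast hp.2.pos
    have hlog : (0:ℝ) ≤ Real.log p := Real.log_nonneg (by exact_mod_cast Nat.one_le_iff_ne_zero.mpr (by omega))
    apply mul_le_mul_of_nonneg_right _ hlog
    have hmod : n < p * (n / p) + p := by
      have := Nat.div_add_mod n p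
      have := Nat.mod_lt n (show 0 < p from hp.2.pos)
      omega
    have : (n:ℝ) < p * ((n / p : ℕ) : ℝ) + p := by exact_mod_cast hmod
    rw [div_le_iff₀ hppos]
    nlinarith
  -- combine
  have hsum : (n:ℝ) * ∑ p ∈ P n, Real.log p / p ≤
      Real.log (n.factorial) + ∑ p ∈ P n, Real.log p := by
    rw [Finset.mul_sum]
    calc ∑ p ∈ P n, (n:ℝ) * (Real.log p / p)
        = ∑ p ∈ P n, (n:ℝ)/p * Real.log p := by
          apply Finset.sum_congr rfl; intro p hp; ring
      _ ≤ ∑ p ∈ P n, (((n / p : ℕ) : ℝ) + 1) * Real.log p := Finset.sum_le_sum hb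
      _ = ∑ p ∈ P n, ((n / p : ℕ) : ℝ) * Real.log p + ∑ p ∈ P n, Real.log p := by
          rw [← Finset.sum_add_distrib]
          apply Finset.sum_congr rfl; intro p hp; ring
      _ ≤ _ := by linarith [ha]
  have hfin : (n:ℝ) * ∑ p ∈ P n, Real.log p / p ≤
      ((n:ℝ)+1) * Real.log n - ((n:ℝ)-1) + (n:ℝ) * (2 * Real.log 2) := by
    have := log_factorial_le hn1
    have := theta_le n
    linarith
  rw [show ((n:ℝ)+1) * Real.log n - ((n:ℝ)-1) + (n:ℝ) * (2 * Real.log 2)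
      = (n:ℝ) * (Real.log n + (Real.log n + 1)/n + (2 * Real.log 2 - 1)) by
    field_simp; ring] at hfin
  exact le_of_mul_le_mul_left hfin hnR

lemma log_term_le {n : ℕ} (hn : 22 ≤ n) : (Real.log n + 1)/n ≤ 0.1862 := by
  have hnR : (22:ℝ) ≤ n := by exact_mod_cast hn
  have h1 : Real.log n ≤ Real.log 22 + ((n:ℝ)/22 - 1) := by
    have h := Real.log_le_sub_one_of_pos (show (0:ℝ) < (n:ℝ)/22 by linarith)
    rw [Real.log_div (by linarith) (by norm_num)] at h
    linarith
  have h22 : Real.log 22 < 3.0919 := by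
    have := Real.log_two_lt_d9
    have : Real.log 22 = Real.log 2 + Real.log 11 := by
      rw [← Real.log_mul (by norm_num) (by norm_num)]; norm_num
    linarith [Real.log_two_lt_d9, log11_lt]
  rw [div_le_iff₀ (by linarith)]
  nlinarith


lemma log_le_sqrt {x : ℝ} (hx : 1 ≤ x) : Real.log x ≤ Real.sqrt x := by
  have hx0 : (0:ℝ) < x := by linarith
  set y := Real.sqrt (Real.sqrt x) with hy
  have hs0 : (0:ℝ) ≤ Real.sqrt x := Real.sqrt_nonneg x
  have hy0 : (0:ℝ) < y := Real.sqrt_pos.mpr (Real.sqrt_pos.mpr hx0)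
  have hysq : y^2 = Real.sqrt x := Real.sq_sqrt hs0
  have hlog : Real.log x = 4 * Real.log y := by
    rw [hy, Real.log_sqrt hs0, Real.log_sqrt hx0.le]; ring
  have h1 : Real.log y ≤ y - 1 := Real.log_le_sub_one_of_pos hy0
  nlinarith [sq_nonneg (y - 2)]

lemma tail_term_le (i : ℕ) :
    (1:ℝ)/(((i:ℝ)+10) * Real.sqrt ((i:ℝ)+10)) ≤
      2 * (1/Real.sqrt ((i:ℝ)+9) - 1/Real.sqrt ((i:ℝ)+10)) := by
  set u := Real.sqrt ((i:ℝ)+9) with hu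
  set v := Real.sqrt ((i:ℝ)+10) with hv
  have hu0 : (0:ℝ) < u := Real.sqrt_pos.mpr (by positivity)
  have hv0 : (0:ℝ) < v := Real.sqrt_pos.mpr (by positivity)
  have hu2 : u^2 = (i:ℝ)+9 := Real.sq_sqrt (by positivity)
  have hv2 : v^2 = (i:ℝ)+10 := Real.sq_sqrt (by positivity)
  have huv : u ≤ v := Real.sqrt_le_sqrt (by linarith)
  have h1 : 2 * (1/u - 1/v) = 2 * (v - u) / (u*v) := by
    field_simp
  have h2 : (v - u) * (v + u) = 1 := by nlinarith
  rw [h1, ← hv2]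
  rw [div_le_div_iff₀ (by positivity) (by positivity)]
  have key : u*v*(u+v) ≤ 2*(v^2*v) := by nlinarith
  have key2 : (2 * (v - u) * (v^2 * v)) * (u+v) = 2*(v^2*v) := by
    linear_combination (2*(v^2*v)) * h2
  have key3 : (1*(u*v))*(u+v) ≤ (2 * (v - u) * (v^2 * v))*(u+v) := by
    rw [key2]; linarith
  exact le_of_mul_le_mul_right key3 (by positivity)

lemma C2_le (n : ℕ) :
    ∑ p ∈ P n, Real.log p / ((p:ℝ) * ((p:ℝ)-1)) ≤ 1.3233 := by
  classical
  have htnonneg : ∀ p : ℕ, p.Prime → (0:ℝ) ≤ Real.log p / ((p:ℝ) * ((p:ℝ)-1)) := by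
    intro p hp
    have h2 : (2:ℝ) ≤ p := by exact_mod_cast hp.two_le
    apply div_nonneg (Real.log_nonneg (by linarith)) (by nlinarith)
  rw [← Finset.sum_filter_add_sum_filter_not (P n) (fun p => p ≤ 10)]
  have hhead : ∑ p ∈ (P n).filter (fun p => p ≤ 10), Real.log p / ((p:ℝ) * ((p:ℝ)-1))
      ≤ Real.log 2 / 2 + Real.log 3 / 6 + Real.log 5 / 20 + Real.log 7 / 42 := by
    have hsub : (P n).filter (fun p => p ≤ 10) ⊆ ({2,3,5,7} : Finset ℕ) := by
      intro p hp
      simp only [Finset.mem_filter, Finset.mem_range] at hp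
      obtain ⟨⟨_, hprime⟩, hle⟩ := hp
      have h2 := hprime.two_le
      interval_cases p <;> first
        | (exfalso; exact absurd hprime (by decide))
        | (simp)
    calc ∑ p ∈ (P n).filter (fun p => p ≤ 10), Real.log p / ((p:ℝ) * ((p:ℝ)-1))
        ≤ ∑ p ∈ ({2,3,5,7} : Finset ℕ), Real.log p / ((p:ℝ) * ((p:ℝ)-1)) := by
          apply Finset.sum_le_sum_of_subset_of_nonneg hsub
          intro p hp _
          simp only [Finset.mem_insert, Finset.mem_singleton] at hp
          rcases hp with rfl|rfl|rfl|rfl <;>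
            apply htnonneg <;> norm_num
      _ = Real.log 2 / 2 + Real.log 3 / 6 + Real.log 5 / 20 + Real.log 7 / 42 := by
          norm_num
          ring
  have htail : ∑ p ∈ (P n).filter (fun p => ¬ p ≤ 10), Real.log p / ((p:ℝ) * ((p:ℝ)-1))
      ≤ 2/3 := by
    have hbnd : ∀ p ∈ (P n).filter (fun p => ¬ p ≤ 10),
        Real.log p / ((p:ℝ) * ((p:ℝ)-1)) ≤
          1/(((p:ℝ)-1) * Real.sqrt ((p:ℝ)-1)) := by
      intro p hp
      simp only [Finset.mem_filter, Finset.mem_range, not_le] at hp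
      obtain ⟨⟨_, hprime⟩, h11⟩ := hp
      have hpR : (11:ℝ) ≤ p := by exact_mod_cast h11
      have hlog := log_le_sqrt (show (1:ℝ) ≤ p by linarith)
      have hsq : Real.sqrt ((p:ℝ)) * Real.sqrt ((p:ℝ)-1) ≤ (p:ℝ) := by
        rw [← Real.sqrt_mul (by linarith)]
        calc Real.sqrt ((p:ℝ) * ((p:ℝ)-1)) ≤ Real.sqrt ((p:ℝ)^2) := by
              apply Real.sqrt_le_sqrt; nlinarith
          _ = (p:ℝ) := Real.sqrt_sq (by linarith)
      have hs1 : (0:ℝ) < Real.sqrt ((p:ℝ)-1) := Real.sqrt_pos.mpr (by linarith)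
      have hs2 : (0:ℝ) ≤ Real.sqrt ((p:ℝ)) := Real.sqrt_nonneg _
      calc Real.log p / ((p:ℝ) * ((p:ℝ)-1))
          ≤ Real.sqrt p / ((p:ℝ) * ((p:ℝ)-1)) := by
            exact (div_le_div_iff_of_pos_right (by nlinarith)).mpr hlog
          _ ≤ 1/(((p:ℝ)-1) * Real.sqrt ((p:ℝ)-1)) := by
            rw [div_le_div_iff₀ (by nlinarith) (mul_pos (by linarith) hs1)]
            calc Real.sqrt ((p:ℝ)) * (((p:ℝ)-1) * Real.sqrt ((p:ℝ)-1))
                = (Real.sqrt ((p:ℝ)) * Real.sqrt ((p:ℝ)-1)) * ((p:ℝ)-1) := by ring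
              _ ≤ (p:ℝ) * ((p:ℝ)-1) := by nlinarith
              _ = 1 * ((p:ℝ) * ((p:ℝ)-1)) := by ring
    have hsub2 : (P n).filter (fun p => ¬ p ≤ 10) ⊆ Finset.Ico 11 (n+1) := by
      intro p hp
      simp only [Finset.mem_filter, Finset.mem_range, not_le] at hp
      simp only [Finset.mem_Ico]
      omega
    have hnn : ∀ m : ℕ, 11 ≤ m → (0:ℝ) ≤ 1/(((m:ℝ)-1) * Real.sqrt ((m:ℝ)-1)) := by
      intro m hm
      have : (11:ℝ) ≤ m := by exact_mod_cast hm
      have h2 : (0:ℝ) < Real.sqrt ((m:ℝ)-1) := Real.sqrt_pos.mpr (by linarith)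
      exact le_of_lt (div_pos one_pos (mul_pos (by linarith) h2))
    set h : ℕ → ℝ := fun i => 1/Real.sqrt ((i:ℝ)+9) with hh
    calc ∑ p ∈ (P n).filter (fun p => ¬ p ≤ 10), Real.log p / ((p:ℝ) * ((p:ℝ)-1))
        ≤ ∑ p ∈ (P n).filter (fun p => ¬ p ≤ 10),
            1/(((p:ℝ)-1) * Real.sqrt ((p:ℝ)-1)) := Finset.sum_le_sum hbnd
      _ ≤ ∑ m ∈ Finset.Ico 11 (n+1), 1/(((m:ℝ)-1) * Real.sqrt ((m:ℝ)-1)) := by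
          apply Finset.sum_le_sum_of_subset_of_nonneg hsub2
          intro m hm _
          simp only [Finset.mem_Ico] at hm
          exact hnn m hm.1
      _ = ∑ i ∈ Finset.range (n+1-11), 1/(((((11+i:ℕ):ℝ))-1)
            * Real.sqrt (((((11+i:ℕ):ℝ))-1))) := Finset.sum_Ico_eq_sum_range _ _ _
      _ ≤ ∑ i ∈ Finset.range (n+1-11), 2 * (h i - h (i+1)) := by
          apply Finset.sum_le_sum
          intro i _
          have hc : (((11+i:ℕ):ℝ)) - 1 = (i:ℝ) + 10 := by push_cast; ring
          have h1 : h (i+1) = 1/Real.sqrt ((i:ℝ)+10) := by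
            simp only [hh]; push_cast; ring_nf
          have h2 : h i = 1/Real.sqrt ((i:ℝ)+9) := rfl
          rw [hc, h1, h2]
          exact tail_term_le i
      _ = 2 * (h 0 - h (n+1-11)) := by
          rw [← Finset.mul_sum, Finset.sum_range_sub' h]
      _ ≤ 2/3 := by
          have h0 : h 0 = 1/3 := by
            simp only [hh, Nat.cast_zero, zero_add]
            rw [show (9:ℝ) = 3^2 by norm_num, Real.sqrt_sq (by norm_num : (0:ℝ) ≤ 3)]
          have hk : 0 ≤ h (n+1-11) := by
            simp only [hh]; positivity
          rw [h0]; linarith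
  linarith [hhead, htail, Real.log_two_lt_d9,
    (by linarith [log3_lt] : Real.log 3 / 6 < 0.18315),
    (by linarith [log5_lt] : Real.log 5 / 20 < 0.08048),
    (by linarith [log7_lt] : Real.log 7 / 42 < 0.046412)]

/-- **Lemma.** For every integer `q ≥ 2`,
`Σ_{p∣q} (log p)/(p−1) ≤ 1.02 log log q + 3.04`. -/
theorem sum_log_p_div_p_sub_one_bound (q : ℕ) (hq : 2 ≤ q) :
    (∑ p ∈ q.primeFactors, Real.log p / (p - 1))
      ≤ 1.02 * Real.log (Real.log q) + 3.04 := by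
  classical
  have hq0 : 0 < q := by omega
  have hqR : (2:ℝ) ≤ q := by exact_mod_cast hq
  set L := Real.log q with hLdef
  have hL2 : Real.log 2 ≤ L := Real.log_le_log (by norm_num) hqR
  have hl2u := Real.log_two_lt_d9
  have hl2l := Real.log_two_gt_d9
  have hfnonneg : ∀ p : ℕ, p.Prime → (0:ℝ) ≤ Real.log p / ((p:ℝ) - 1) := by
    intro p hp
    have h2 : (2:ℝ) ≤ p := by exact_mod_cast hp.two_le
    exact div_nonneg (Real.log_nonneg (by linarith)) (by linarith)
  have hlognn : ∀ p ∈ q.primeFactors, (0:ℝ) ≤ Real.log p := by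
    intro p hp
    have h2 : (2:ℝ) ≤ p := by exact_mod_cast (Nat.prime_of_mem_primeFactors hp).two_le
    exact Real.log_nonneg (by linarith)
  -- sum of logs of prime factors is at most log q
  have hrad : ∑ p ∈ q.primeFactors, Real.log p ≤ L := by
    have hd := Nat.prod_primeFactors_dvd q
    have hle : ((∏ p ∈ q.primeFactors, p : ℕ) : ℝ) ≤ (q:ℝ) := by
      exact_mod_cast Nat.le_of_dvd hq0 hd
    have hpos : 0 < ∏ p ∈ q.primeFactors, p :=
      Finset.prod_pos (fun p hp => (Nat.prime_of_mem_primeFactors hp).pos)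
    have hlog := Real.log_le_log (by exact_mod_cast hpos) hle
    rw [show ((∏ p ∈ q.primeFactors, p : ℕ) : ℝ) = ∏ p ∈ q.primeFactors, (p:ℝ) by
      push_cast; rfl] at hlog
    rw [Real.log_prod (fun p hp => by
      have := (Nat.prime_of_mem_primeFactors hp).pos
      have : (0:ℝ) < p := by exact_mod_cast this
      positivity)] at hlog
    exact hlog
  rcases le_or_gt L 15 with hreg | hreg
  · -- small regime : q with log q ≤ 15
    have hbound : ∑ p ∈ q.primeFactors, Real.log p / ((p:ℝ) - 1)
        ≤ Real.log 2 + Real.log 3 / 2 + L / 4 := by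
      rw [← Finset.sum_filter_add_sum_filter_not q.primeFactors (fun p => p ≤ 3)]
      have hhead : ∑ p ∈ q.primeFactors.filter (fun p => p ≤ 3),
          Real.log p / ((p:ℝ) - 1) ≤ Real.log 2 + Real.log 3 / 2 := by
        have hsub : q.primeFactors.filter (fun p => p ≤ 3) ⊆ ({2,3} : Finset ℕ) := by
          intro p hp
          simp only [Finset.mem_filter] at hp
          have := (Nat.prime_of_mem_primeFactors hp.1).two_le
          simp only [Finset.mem_insert, Finset.mem_singleton]
          omega
        calc ∑ p ∈ q.primeFactors.filter (fun p => p ≤ 3), Real.log p / ((p:ℝ) - 1)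
            ≤ ∑ p ∈ ({2,3} : Finset ℕ), Real.log p / ((p:ℝ) - 1) := by
              apply Finset.sum_le_sum_of_subset_of_nonneg hsub
              intro p hp _
              simp only [Finset.mem_insert, Finset.mem_singleton] at hp
              rcases hp with rfl|rfl <;> apply hfnonneg <;> norm_num
          _ = Real.log 2 + Real.log 3 / 2 := by norm_num
      have htail : ∑ p ∈ q.primeFactors.filter (fun p => ¬ p ≤ 3),
          Real.log p / ((p:ℝ) - 1) ≤ L / 4 := by
        have h1 : ∀ p ∈ q.primeFactors.filter (fun p => ¬ p ≤ 3),
            Real.log p / ((p:ℝ) - 1) ≤ Real.log p / 4 := by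
          intro p hp
          simp only [Finset.mem_filter, not_le] at hp
          have hprime := Nat.prime_of_mem_primeFactors hp.1
          have h5 : 5 ≤ p := by
            rcases Nat.lt_or_ge p 5 with h | h
            · interval_cases p <;> first | omega | (exfalso; exact absurd hprime (by decide))
            · exact h
          have h5R : (5:ℝ) ≤ p := by exact_mod_cast h5
          apply div_le_div_of_nonneg_left (Real.log_nonneg (by linarith)) (by norm_num)
          linarith
        calc ∑ p ∈ q.primeFactors.filter (fun p => ¬ p ≤ 3), Real.log p / ((p:ℝ) - 1)
            ≤ ∑ p ∈ q.primeFactors.filter (fun p => ¬ p ≤ 3), Real.log p / 4 :=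
              Finset.sum_le_sum h1
          _ ≤ ∑ p ∈ q.primeFactors, Real.log p / 4 := by
              apply Finset.sum_le_sum_of_subset_of_nonneg (Finset.filter_subset _ _)
              intro p hp _
              have := hlognn p hp
              linarith
          _ = (∑ p ∈ q.primeFactors, Real.log p) / 4 := by
              rw [Finset.sum_div]
          _ ≤ L / 4 := by linarith
      linarith
    -- chord argument : for log 2 ≤ L ≤ 15,
    --   log 2 + log 3 / 2 + L/4 ≤ 1.02 * log L + 3.04
    have hl3 : Real.log 3 < 1.0989 := log3_lt
    set t := (15 - L) / (14.5 : ℝ) with ht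
    set s := (L - 0.5) / (14.5 : ℝ) with hs
    have ht0 : 0 ≤ t := by rw [ht]; apply div_nonneg <;> linarith
    have hs0 : 0 ≤ s := by rw [hs]; apply div_nonneg <;> linarith
    have hts : t + s = 1 := by rw [ht, hs]; ring
    have hcomb : t * (0.5:ℝ) + s * 15 = L := by rw [ht, hs]; ring
    have hconc := (strictConcaveOn_log_Ioi.concaveOn).2
      (Set.mem_Ioi.mpr (by norm_num : (0:ℝ) < 0.5))
      (Set.mem_Ioi.mpr (by norm_num : (0:ℝ) < 15)) ht0 hs0 hts
    simp only [smul_eq_mul] at hconc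
    rw [hcomb] at hconc
    -- log (1/2) = - log 2 ; log 15 ≥ 3 log 2
    have hhalf : Real.log (0.5:ℝ) = - Real.log 2 := by
      rw [show (0.5:ℝ) = 2⁻¹ by norm_num, Real.log_inv]
    have h15 : Real.log (15:ℝ) ≥ 3 * Real.log 2 := by
      rw [show (3:ℝ) * Real.log 2 = Real.log (2^3) by rw [Real.log_pow]; push_cast; ring]
      apply Real.log_le_log (by norm_num)
      norm_num
    have hb1 : t * Real.log (0.5:ℝ) ≥ t * (-0.6931471808) := by
      rw [hhalf]
      apply mul_le_mul_of_nonneg_left _ ht0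
      linarith
    have hb2 : s * Real.log (15:ℝ) ≥ s * (3 * 0.6931471803) := by
      apply mul_le_mul_of_nonneg_left _ hs0
      linarith
    have hlogL : Real.log L ≥ t * (-0.6931471808) + s * (3 * 0.6931471803) := by
      calc Real.log L ≥ t * Real.log (0.5:ℝ) + s * Real.log 15 := hconc
        _ ≥ _ := by linarith
    have hLeq : L = t * 0.5 + s * 15 := hcomb.symm
    linarith
  · -- large regime : log q > 15
    have hL15 : (15:ℝ) ≤ L := le_of_lt hreg
    set n := ⌊(1.5:ℝ) * L⌋₊ with hn
    have hfl : (1.5:ℝ) * L - 1 < n := Nat.sub_one_lt_floor _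
    have hnle : (n:ℝ) ≤ 1.5 * L := Nat.floor_le (by linarith)
    have hn22 : 22 ≤ n := by
      by_contra h
      push_neg at h
      have : (n:ℝ) ≤ 21 := by exact_mod_cast Nat.lt_succ_iff.mp h
      linarith
    have hnR : (22:ℝ) ≤ n := by exact_mod_cast hn22
    have hLn : L / n ≤ 0.698 := by
      rw [div_le_iff₀ (by linarith)]
      nlinarith
    rw [← Finset.sum_filter_add_sum_filter_not q.primeFactors (fun p => p ≤ n)]
    have htail : ∑ p ∈ q.primeFactors.filter (fun p => ¬ p ≤ n),
        Real.log p / ((p:ℝ) - 1) ≤ 0.698 := by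
      have h1 : ∀ p ∈ q.primeFactors.filter (fun p => ¬ p ≤ n),
          Real.log p / ((p:ℝ) - 1) ≤ Real.log p / n := by
        intro p hp
        simp only [Finset.mem_filter, not_le] at hp
        have hpn : (n:ℝ) + 1 ≤ p := by exact_mod_cast hp.2
        apply div_le_div_of_nonneg_left (Real.log_nonneg (by linarith)) (by linarith)
        linarith
      calc ∑ p ∈ q.primeFactors.filter (fun p => ¬ p ≤ n), Real.log p / ((p:ℝ) - 1)
          ≤ ∑ p ∈ q.primeFactors.filter (fun p => ¬ p ≤ n), Real.log p / n :=
            Finset.sum_le_sum h1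
        _ ≤ ∑ p ∈ q.primeFactors, Real.log p / n := by
            apply Finset.sum_le_sum_of_subset_of_nonneg (Finset.filter_subset _ _)
            intro p hp _
            have := hlognn p hp
            positivity
        _ = (∑ p ∈ q.primeFactors, Real.log p) / n := by rw [Finset.sum_div]
        _ ≤ L / n := by
            apply div_le_div_of_nonneg_right hrad
            linarith
        _ ≤ 0.698 := hLn
    have hhead : ∑ p ∈ q.primeFactors.filter (fun p => p ≤ n),
        Real.log p / ((p:ℝ) - 1) ≤
          Real.log n + 0.1862 + (2 * Real.log 2 - 1) + 1.3233 := by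
      have hsub : q.primeFactors.filter (fun p => p ≤ n) ⊆
          Finset.filter Nat.Prime (Finset.range (n+1)) := by
        intro p hp
        simp only [Finset.mem_filter] at hp ⊢
        exact ⟨Finset.mem_range.mpr (by omega), Nat.prime_of_mem_primeFactors hp.1⟩
      have hstep1 : ∑ p ∈ q.primeFactors.filter (fun p => p ≤ n),
          Real.log p / ((p:ℝ) - 1) ≤
          ∑ p ∈ Finset.filter Nat.Prime (Finset.range (n+1)), Real.log p / ((p:ℝ) - 1) := by
        apply Finset.sum_le_sum_of_subset_of_nonneg hsub
        intro p hp _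
        exact hfnonneg p (Finset.mem_filter.mp hp).2
      have hsplit : ∑ p ∈ Finset.filter Nat.Prime (Finset.range (n+1)),
          Real.log p / ((p:ℝ) - 1) =
          (∑ p ∈ Finset.filter Nat.Prime (Finset.range (n+1)), Real.log p / p) +
          ∑ p ∈ Finset.filter Nat.Prime (Finset.range (n+1)),
            Real.log p / ((p:ℝ) * ((p:ℝ)-1)) := by
        rw [← Finset.sum_add_distrib]
        apply Finset.sum_congr rfl
        intro p hp
        simp only [Finset.mem_filter] at hp
        have h2 : (2:ℝ) ≤ p := by exact_mod_cast hp.2.two_le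
        have h0 : (p:ℝ) ≠ 0 := by linarith
        have h1 : (p:ℝ) - 1 ≠ 0 := by
          intro h
          have : (p:ℝ) = 1 := by linarith
          linarith
        field_simp
        ring
      have hm := mertens_aux hn22
      have hlt := log_term_le hn22
      have hc2 := C2_le n
      calc ∑ p ∈ q.primeFactors.filter (fun p => p ≤ n), Real.log p / ((p:ℝ) - 1)
          ≤ ∑ p ∈ Finset.filter Nat.Prime (Finset.range (n+1)),
              Real.log p / ((p:ℝ) - 1) := hstep1
        _ = _ + _ := hsplit
        _ ≤ Real.log n + 0.1862 + (2 * Real.log 2 - 1) + 1.3233 := by linarith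
    -- final numeric assembly
    have hn0 : (0:ℝ) < n := by linarith
    have hlogn : Real.log n ≤ Real.log 3 - Real.log 2 + Real.log L := by
      have hmono : Real.log n ≤ Real.log (1.5 * L) :=
        Real.log_le_log hn0 hnle
      rw [Real.log_mul (by norm_num) (by positivity)] at hmono
      rw [show (1.5:ℝ) = 3/2 by norm_num,
        Real.log_div (by norm_num) (by norm_num)] at hmono
      linarith
    have hlogL0 : 0 ≤ Real.log L := Real.log_nonneg (by linarith)
    have hl3 := log3_lt
    linarith
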